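/- Let d and n be positive integers, let R be a finite commutative ring with characteristic N, and let f_0, f_1, ..., f_d : R → ℂ be 1-bounded functions. For each i ∈ {1, ..., d}, let a^{(i)} = (a^{(i)}_1, ..., a^{(i)}_n) be an n-tuple of elements of ℤ/Nℤ, viewed in R via the canonical map, such that every component a^{(i)}_k is a unit of R and, for all i ≠ j, every component of a^{(i)} − a^{(j)} is a unit of R. Then | (1/|R|^{n+1}) · ∑_{x ∈ R, y ∈ R^n} f_0(x) · ∏_{i=1}^{d} f_i(x + ∑_{k=1}^{n} a^{(i)}_k · y_k) | ≤ ‖f_d‖_{U^d}. -/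

import Mathlib

open scoped BigOperators Classical

/-- Multiplicative discrete derivative: `Δ_h f (x) = f(x+h) · conj (f x)`. -/
def mDeriv {R : Type*} [Add R] (h : R) (f : R → ℂ) : R → ℂ :=
  fun x => f (x + h) * (starRingEnd ℂ) (f x)

/-- Iterated multiplicative discrete derivative `Δ_{h₁,…,h_s} f`. -/
def mDerivIter {R : Type*} [Add R] : (s : ℕ) → (Fin s → R) → (R → ℂ) → (R → ℂ)
  | 0, _, f => f
  | s + 1, h, f => mDeriv (h 0) (mDerivIter s (fun i => h i.succ) f)

/-- The Gowers uniformity (semi)norm `‖f‖_{U^s}` on a finite additive group `R`, defined by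
`‖f‖_{U^s}^{2^s} = (1/|R|^{s+1}) ∑_{x,h₁,…,h_s} Δ_{h₁,…,h_s} f(x)`. -/
noncomputable def gowersNorm (R : Type*) [AddCommGroup R] [Fintype R] (s : ℕ)
    (f : R → ℂ) : ℝ :=
  (((1 : ℂ) / (Fintype.card R : ℂ) ^ (s + 1)) *
      ∑ x : R, ∑ h : Fin s → R, mDerivIter s h f x).re ^ ((1 : ℝ) / 2 ^ s)

set_option linter.unusedSectionVars false

section Helpers

variable {R : Type*} [AddCommGroup R]

lemma mDerivIter_succ {s : ℕ} (h : Fin (s+1) → R) (f : R → ℂ) :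
    mDerivIter (s+1) h f = mDeriv (h 0) (mDerivIter s (fun i => h i.succ) f) := rfl

lemma mDeriv_comm (a b : R) (f : R → ℂ) : mDeriv a (mDeriv b f) = mDeriv b (mDeriv a f) := by
  funext x
  simp only [mDeriv, map_mul, RingHomCompTriple.comp_apply, Complex.conj_conj,
    RingHom.id_apply, add_right_comm]
  ring

lemma mDerivIter_mDeriv (s : ℕ) (h : Fin s → R) (t : R) (f : R → ℂ) :
    mDerivIter s h (mDeriv t f) = mDeriv t (mDerivIter s h f) := by
  induction s with
  | zero => rfl
  | succ s ih =>
      show mDeriv (h 0) (mDerivIter s _ (mDeriv t f)) = _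
      rw [ih, mDeriv_comm]
      rfl

lemma mDeriv_conj (a : R) (f : R → ℂ) :
    mDeriv a (fun x => (starRingEnd ℂ) (f x)) = fun x => (starRingEnd ℂ) (mDeriv a f x) := by
  funext x
  simp [mDeriv, mul_comm]

lemma mDerivIter_conj (s : ℕ) (h : Fin s → R) (f : R → ℂ) :
    mDerivIter s h (fun x => (starRingEnd ℂ) (f x)) =
      fun x => (starRingEnd ℂ) (mDerivIter s h f x) := by
  induction s with
  | zero => rfl
  | succ s ih =>
      show mDeriv (h 0) (mDerivIter s _ _) = _
      rw [ih, mDeriv_conj]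
      rfl

variable [Fintype R]

/-- Unnormalized Gowers sum (real part). -/
noncomputable def USum (s : ℕ) (f : R → ℂ) : ℝ :=
  (∑ x : R, ∑ h : Fin s → R, mDerivIter s h f x).re

lemma my_sum_translate {M : Type*} [AddCommMonoid M] (t : R) (F : R → M) :
    ∑ x : R, F (x + t) = ∑ x : R, F x :=
  Equiv.sum_comp (Equiv.addRight t) F

lemma my_sum_translate' {M : Type*} [AddCommMonoid M] (t : R) (F : R → M) :
    ∑ x : R, F (t + x) = ∑ x : R, F x :=
  Equiv.sum_comp (Equiv.addLeft t) F

lemma USum_succ (s : ℕ) (f : R → ℂ) :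
    USum (s + 1) f = ∑ t : R, USum s (mDeriv t f) := by
  unfold USum
  rw [← Complex.re_sum]
  congr 1
  have : ∀ x : R, ∑ h : Fin (s+1) → R, mDerivIter (s+1) h f x
      = ∑ t : R, ∑ h : Fin s → R, mDerivIter s h (mDeriv t f) x := by
    intro x
    rw [← (Fin.consEquiv (fun _ : Fin (s+1) => R)).sum_comp
      (fun h => mDerivIter (s+1) h f x), Fintype.sum_prod_type]
    refine Finset.sum_congr rfl fun t _ => Finset.sum_congr rfl fun h' _ => ?_
    rw [mDerivIter_mDeriv]
    show mDerivIter (s+1) (Fin.cons t h') f x = _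
    rw [mDerivIter_succ]
    have h0 : (Fin.cons t h' : Fin (s+1) → R) 0 = t := rfl
    have hs : (fun i => (Fin.cons t h' : Fin (s+1) → R) i.succ) = h' := by
      funext i; simp
    rw [h0, hs]
  calc ∑ x : R, ∑ h : Fin (s+1) → R, mDerivIter (s+1) h f x
      = ∑ x : R, ∑ t : R, ∑ h : Fin s → R, mDerivIter s h (mDeriv t f) x :=
        Finset.sum_congr rfl fun x _ => this x
    _ = ∑ t : R, ∑ x : R, ∑ h : Fin s → R, mDerivIter s h (mDeriv t f) x :=
        Finset.sum_comm

lemma USum_conj (s : ℕ) (f : R → ℂ) :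
    USum s (fun x => (starRingEnd ℂ) (f x)) = USum s f := by
  unfold USum
  rw [show (∑ x : R, ∑ h : Fin s → R, mDerivIter s h (fun x => (starRingEnd ℂ) (f x)) x)
      = (starRingEnd ℂ) (∑ x : R, ∑ h : Fin s → R, mDerivIter s h f x) by
    rw [map_sum]
    exact Finset.sum_congr rfl fun x _ => by
      rw [map_sum]; exact Finset.sum_congr rfl fun h _ => by rw [mDerivIter_conj]]
  exact Complex.conj_re _

lemma USum_one (f : R → ℂ) : USum 1 f = Complex.normSq (∑ x : R, f x) := by
  unfold USum
  have h1 : ∀ x : R, ∑ h : Fin 1 → R, mDerivIter 1 h f x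
      = (∑ t : R, f (x + t)) * (starRingEnd ℂ) (f x) := by
    intro x
    calc ∑ h : Fin 1 → R, mDerivIter 1 h f x
        = ∑ t : R, f (x + t) * (starRingEnd ℂ) (f x) := by
          rw [← (Equiv.funUnique (Fin 1) R).symm.sum_comp (fun h => mDerivIter 1 h f x)]
          exact Finset.sum_congr rfl fun t _ => rfl
      _ = (∑ t : R, f (x + t)) * (starRingEnd ℂ) (f x) := (Finset.sum_mul _ _ _).symm
  calc (∑ x : R, ∑ h : Fin 1 → R, mDerivIter 1 h f x).re
      = (∑ x : R, (∑ t : R, f t) * (starRingEnd ℂ) (f x)).re := by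
        congr 1
        exact Finset.sum_congr rfl fun x _ => by rw [h1 x, my_sum_translate' x f]
    _ = ((∑ t : R, f t) * (starRingEnd ℂ) (∑ x : R, f x)).re := by
        rw [← Finset.mul_sum, map_sum]
    _ = Complex.normSq (∑ x : R, f x) := by
        rw [Complex.mul_conj]
        simp

end Helpers

section L1

variable {R : Type*} [CommRing R] [Fintype R]

lemma sum_eval_fixed {n : ℕ} (k0 : Fin n) {M : Type*} [AddCommMonoid M] (g : R → M) :
    ∑ z : Fin n → R, g (z k0) = (Fintype.card R) ^ (n - 1) • ∑ t : R, g t := by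
  classical
  rw [← (Equiv.funSplitAt k0 R).symm.sum_comp (fun z => g (z k0)), Fintype.sum_prod_type]
  have hcard : Fintype.card ({ j : Fin n // j ≠ k0 } → R) = Fintype.card R ^ (n - 1) := by
    rw [Fintype.card_fun]
    congr 1
    rw [Fintype.card_subtype_compl, Fintype.card_subtype_eq, Fintype.card_fin]
  calc ∑ t : R, ∑ w : { j : Fin n // j ≠ k0 } → R,
        g ((Equiv.funSplitAt k0 R).symm (t, w) k0)
      = ∑ t : R, ∑ _w : { j : Fin n // j ≠ k0 } → R, g t := by
        refine Finset.sum_congr rfl fun t _ => Finset.sum_congr rfl fun w _ => ?_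
        congr 1
        simp
    _ = ∑ t : R, (Fintype.card R) ^ (n - 1) • g t := by
        refine Finset.sum_congr rfl fun t _ => ?_
        rw [Finset.sum_const, ← hcard]
        simp
    _ = (Fintype.card R) ^ (n - 1) • ∑ t : R, g t := (Finset.smul_sum).symm

lemma sum_comp_linear {n : ℕ} (k0 : Fin n) {M : Type*} [AddCommMonoid M]
    (c : Fin n → R) (hc : IsUnit (c k0)) (g : R → M) :
    ∑ y : Fin n → R, g (∑ k, c k * y k) = (Fintype.card R) ^ (n - 1) • ∑ t : R, g t := by
  classical
  set φ : (Fin n → R) → (Fin n → R) := fun y => Function.update y k0 (∑ k, c k * y k) with hφ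
  have hinj : Function.Injective φ := by
    intro y y' hyy
    have hne : ∀ k, k ≠ k0 → y k = y' k := by
      intro k hk
      have := congrFun hyy k
      simpa [hφ, Function.update_of_ne hk] using this
    have hsum : ∑ k, c k * y k = ∑ k, c k * y' k := by
      have := congrFun hyy k0
      simpa [hφ] using this
    have hall : ∀ k, y k = y' k := by
      intro k
      by_cases hk : k = k0
      · subst hk
        have h1 : c k * y k = c k * y' k := by
          have e1 : ∑ k', c k' * y k' = c k * y k + ∑ k' ∈ Finset.univ.erase k, c k' * y k' :=
            (Finset.add_sum_erase _ _ (Finset.mem_univ k)).symm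
          have e2 : ∑ k', c k' * y' k' = c k * y' k + ∑ k' ∈ Finset.univ.erase k, c k' * y' k' :=
            (Finset.add_sum_erase _ _ (Finset.mem_univ k)).symm
          have e3 : ∑ k' ∈ Finset.univ.erase k, c k' * y k'
              = ∑ k' ∈ Finset.univ.erase k, c k' * y' k' :=
            Finset.sum_congr rfl fun k' hk' => by
              rw [hne k' (Finset.ne_of_mem_erase hk')]
          rw [e1, e2, e3] at hsum
          exact add_right_cancel hsum
        exact hc.mul_left_cancel h1
      · exact hne k hk
    funext k; exact hall k
  have hbij : Function.Bijective φ := Finite.injective_iff_bijective.mp hinj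
  calc ∑ y : Fin n → R, g (∑ k, c k * y k)
      = ∑ y : Fin n → R, g (φ y k0) := by
        refine Finset.sum_congr rfl fun y _ => ?_
        rw [hφ]
        simp
    _ = ∑ z : Fin n → R, g (z k0) := hbij.sum_comp (fun z => g (z k0))
    _ = (Fintype.card R) ^ (n - 1) • ∑ t : R, g t := sum_eval_fixed k0 g

end L1

section VD

variable {R : Type*} [CommRing R] [Fintype R] {n : ℕ}

/-- dot product of coefficient tuple with variable tuple -/
def vd (c y : Fin n → R) : R := ∑ k, c k * y k

lemma vd_sub_eq (c c' y : Fin n → R) :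
    vd (fun k => c k - c' k) y = vd c y - vd c' y := by
  simp [vd, sub_mul, Finset.sum_sub_distrib]

lemma vd_add_right (c y h : Fin n → R) : vd c (y + h) = vd c y + vd c h := by
  simp [vd, mul_add, Finset.sum_add_distrib]

end VD

section Engine

variable {R : Type*} [CommRing R] [Fintype R]

lemma abs_sum_le_card (f : R → ℂ) (hf : ∀ x, ‖f x‖ ≤ 1) :
    ‖∑ x : R, f x‖ ≤ (Fintype.card R : ℝ) := by
  calc ‖∑ x : R, f x‖ ≤ ∑ x : R, ‖f x‖ := by
        simpa using norm_sum_le (Finset.univ : Finset R) f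
    _ ≤ ∑ _x : R, (1 : ℝ) := Finset.sum_le_sum fun x _ => hf x
    _ = (Fintype.card R : ℝ) := by simp

lemma engine {n : ℕ} (hn : 0 < n) (m : ℕ) (hm : 1 ≤ m) :
    ∀ (c : Fin (m+1) → Fin n → R) (f : Fin (m+1) → R → ℂ),
      (∀ i x, ‖f i x‖ ≤ 1) →
      (∀ i j : Fin (m+1), i ≠ j → IsUnit (c i ⟨0, hn⟩ - c j ⟨0, hn⟩)) →
      ‖∑ x : R, ∑ y : Fin n → R, ∏ i, f i (x + vd (c i) y)‖ ^ (2^m)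
          * (Fintype.card R : ℝ) ^ (m+1)
        ≤ (Fintype.card R : ℝ) ^ ((n+1) * 2^m) * USum m (f (Fin.last m)) := by
  induction m, hm using Nat.le_induction with
  | base =>
    intro c f hf hc
    set K : ℝ := (Fintype.card R : ℝ) with hK
    have hK0 : 0 ≤ K := Nat.cast_nonneg _
    set k0 : Fin n := ⟨0, hn⟩ with hk0
    have hb : IsUnit ((fun k => c 1 k - c 0 k) k0) := hc 1 0 (by decide)
    have hT : (∑ x : R, ∑ y : Fin n → R, ∏ i, f i (x + vd (c i) y))
        = (∑ x : R, f 0 x) * ((Fintype.card R) ^ (n-1) • ∑ t : R, f 1 t) := by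
      rw [Finset.sum_comm]
      have key : ∀ y : Fin n → R, (∑ x : R, ∏ i : Fin 2, f i (x + vd (c i) y))
          = ∑ x : R, f 0 x * f 1 (x + vd (fun k => c 1 k - c 0 k) y) := by
        intro y
        rw [← my_sum_translate (vd (c 0) y)
          (fun x => f 0 x * f 1 (x + vd (fun k => c 1 k - c 0 k) y))]
        refine Finset.sum_congr rfl fun x _ => ?_
        rw [Fin.prod_univ_two]
        congr 2
        rw [vd_sub_eq]
        ring
      calc ∑ y : Fin n → R, ∑ x : R, ∏ i, f i (x + vd (c i) y)
          = ∑ y : Fin n → R, ∑ x : R, f 0 x * f 1 (x + vd (fun k => c 1 k - c 0 k) y) :=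
            Finset.sum_congr rfl fun y _ => key y
        _ = ∑ x : R, ∑ y : Fin n → R, f 0 x * f 1 (x + vd (fun k => c 1 k - c 0 k) y) :=
            Finset.sum_comm
        _ = ∑ x : R, f 0 x * ∑ y : Fin n → R, f 1 (x + vd (fun k => c 1 k - c 0 k) y) :=
            Finset.sum_congr rfl fun x _ => (Finset.mul_sum _ _ _).symm
        _ = ∑ x : R, f 0 x * ((Fintype.card R) ^ (n-1) • ∑ t : R, f 1 (x + t)) := by
            refine Finset.sum_congr rfl fun x _ => ?_
            congr 1
            exact sum_comp_linear k0 _ hb (fun t => f 1 (x + t))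
        _ = ∑ x : R, f 0 x * ((Fintype.card R) ^ (n-1) • ∑ t : R, f 1 t) := by
            refine Finset.sum_congr rfl fun x _ => ?_
            rw [my_sum_translate' x (f 1)]
        _ = (∑ x : R, f 0 x) * ((Fintype.card R) ^ (n-1) • ∑ t : R, f 1 t) :=
            (Finset.sum_mul _ _ _).symm
    have habs : ‖∑ x : R, ∑ y : Fin n → R, ∏ i, f i (x + vd (c i) y)‖
        = ‖∑ x : R, f 0 x‖ * (K ^ (n-1) * ‖∑ t : R, f 1 t‖) := by
      rw [hT, norm_mul, nsmul_eq_mul, norm_mul, Complex.norm_natCast]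
      push_cast
      simp only [← hK]
    have hUS : USum 1 (f (Fin.last 1)) = ‖∑ t : R, f 1 t‖ ^ 2 := by
      have : f (Fin.last 1) = f 1 := by norm_num [Fin.last]
      rw [this, USum_one, Complex.sq_norm]
    rw [habs, hUS]
    set A := ‖∑ x : R, f 0 x‖ with hA
    set C := ‖∑ t : R, f 1 t‖ with hCdef
    have hC0 : (0:ℝ) ≤ C := norm_nonneg _
    have hA0 : (0:ℝ) ≤ A := norm_nonneg _
    have h0 : A ≤ K := abs_sum_le_card _ (hf 0)
    have hpow : K ^ (n-1) * K = K ^ n := by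
      rw [← pow_succ]
      congr 1
      omega
    have hKK : (K^n) ^ 2 * K ^ 2 = K ^ ((n+1) * 2) := by
      rw [← pow_mul, ← pow_add]
      congr 1
      ring
    have hq : A * (K ^ (n-1) * C) ≤ K * (K ^ (n-1) * C) := by
      apply mul_le_mul_of_nonneg_right h0
      positivity
    calc (A * (K ^ (n-1) * C)) ^ 2 ^ 1 * K ^ (1+1)
        ≤ (K * (K ^ (n-1) * C)) ^ 2 ^ 1 * K ^ (1+1) := by
          apply mul_le_mul_of_nonneg_right _ (by positivity)
          apply pow_le_pow_left₀ (by positivity) hq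
      _ = (K ^ (n-1) * K) ^ 2 * K ^ 2 * C ^ 2 := by ring
      _ = (K ^ n) ^ 2 * K ^ 2 * C ^ 2 := by rw [hpow]
      _ = K ^ ((n+1) * 2 ^ 1) * C ^ 2 := by rw [hKK]; norm_num
  | succ m hm ih =>
    intro c f hf hc
    set K : ℝ := (Fintype.card R : ℝ) with hK
    have hK0 : (0:ℝ) ≤ K := Nat.cast_nonneg _
    set k0 : Fin n := ⟨0, hn⟩ with hk0
    set b : Fin (m+1) → Fin n → R := fun i k => c i.succ k - c 0 k with hb
    set F : Fin (m+1) → R → ℂ := fun i => f i.succ with hF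
    set G : R → ℂ := fun x => ∑ y : Fin n → R, ∏ i : Fin (m+1), F i (x + vd (b i) y) with hG
    set g : (Fin n → R) → Fin (m+1) → R → ℂ :=
      fun h i x => F i x * (starRingEnd ℂ) (F i (x + vd (b i) h)) with hg
    set Th : (Fin n → R) → ℂ :=
      fun h => ∑ x : R, ∑ y : Fin n → R, ∏ i : Fin (m+1), g h i (x + vd (b i) y) with hTh
    have step1 : (∑ x : R, ∑ y : Fin n → R, ∏ i : Fin (m+2), f i (x + vd (c i) y))
        = ∑ x : R, f 0 x * G x := by
      rw [Finset.sum_comm]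
      have key : ∀ y : Fin n → R, (∑ x : R, ∏ i : Fin (m+2), f i (x + vd (c i) y))
          = ∑ x : R, f 0 x * ∏ i : Fin (m+1), F i (x + vd (b i) y) := by
        intro y
        rw [← my_sum_translate (vd (c 0) y)
          (fun x => f 0 x * ∏ i : Fin (m+1), F i (x + vd (b i) y))]
        refine Finset.sum_congr rfl fun x _ => ?_
        rw [Fin.prod_univ_succ]
        congr 1
        refine Finset.prod_congr rfl fun i _ => ?_
        simp only [hF, hb]
        congr 1
        rw [vd_sub_eq]
        ring
      calc ∑ y : Fin n → R, ∑ x : R, ∏ i : Fin (m+2), f i (x + vd (c i) y)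
          = ∑ y : Fin n → R, ∑ x : R, f 0 x * ∏ i : Fin (m+1), F i (x + vd (b i) y) :=
            Finset.sum_congr rfl fun y _ => key y
        _ = ∑ x : R, ∑ y : Fin n → R, f 0 x * ∏ i : Fin (m+1), F i (x + vd (b i) y) :=
            Finset.sum_comm
        _ = ∑ x : R, f 0 x * G x :=
            Finset.sum_congr rfl fun x _ => (Finset.mul_sum _ _ _).symm
    have step2 : ‖∑ x : R, f 0 x * G x‖ ≤ ∑ x : R, ‖G x‖ := by
      calc ‖∑ x : R, f 0 x * G x‖ ≤ ∑ x : R, ‖f 0 x * G x‖ := by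
            simpa using norm_sum_le (Finset.univ : Finset R) (fun x => f 0 x * G x)
        _ ≤ ∑ x : R, ‖G x‖ := Finset.sum_le_sum fun x _ => by
            rw [norm_mul]
            exact mul_le_of_le_one_left (norm_nonneg _) (hf 0 x)
    have step3 : (∑ x : R, ‖G x‖) ^ 2 ≤ K * ∑ x : R, ‖G x‖ ^ 2 := by
      have h := sq_sum_le_card_mul_sum_sq (s := (Finset.univ : Finset R))
        (f := fun x => ‖G x‖)
      simpa [Finset.card_univ, ← hK] using h
    have step4 : ∑ x : R, ‖G x‖ ^ 2 = (∑ h : Fin n → R, Th h).re := by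
      have e1 : ∀ x : R, ‖G x‖ ^ 2 = (G x * (starRingEnd ℂ) (G x)).re := by
        intro x
        rw [Complex.sq_norm, Complex.mul_conj]
        simp
      have e2 : ∀ x : R, G x * (starRingEnd ℂ) (G x)
          = ∑ y : Fin n → R, ∑ h : Fin n → R, ∏ i : Fin (m+1), g h i (x + vd (b i) y) := by
        intro x
        rw [hG]
        rw [map_sum, Finset.sum_mul_sum]
        refine Finset.sum_congr rfl fun y _ => ?_
        rw [← my_sum_translate' (M := ℂ) y
          (fun y' => (∏ i : Fin (m+1), F i (x + vd (b i) y)) *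
            (starRingEnd ℂ) (∏ i : Fin (m+1), F i (x + vd (b i) y')))]
        refine Finset.sum_congr rfl fun h _ => ?_
        rw [map_prod, ← Finset.prod_mul_distrib]
        refine Finset.prod_congr rfl fun i _ => ?_
        rw [vd_add_right]
        simp only [hg]
        rw [add_assoc]
      calc ∑ x : R, ‖G x‖ ^ 2
          = ∑ x : R, (G x * (starRingEnd ℂ) (G x)).re :=
            Finset.sum_congr rfl fun x _ => e1 x
        _ = (∑ x : R, G x * (starRingEnd ℂ) (G x)).re := (Complex.re_sum _ _).symm
        _ = (∑ x : R, ∑ y : Fin n → R, ∑ h : Fin n → R,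
              ∏ i : Fin (m+1), g h i (x + vd (b i) y)).re := by
            congr 1
            exact Finset.sum_congr rfl fun x _ => e2 x
        _ = (∑ h : Fin n → R, Th h).re := by
            congr 1
            rw [show (∑ x : R, ∑ y : Fin n → R, ∑ h : Fin n → R,
                ∏ i : Fin (m+1), g h i (x + vd (b i) y))
              = ∑ x : R, ∑ h : Fin n → R, ∑ y : Fin n → R,
                ∏ i : Fin (m+1), g h i (x + vd (b i) y) from
              Finset.sum_congr rfl fun x _ => Finset.sum_comm]
            exact Finset.sum_comm
    have step5 : (∑ h : Fin n → R, Th h).re ≤ ∑ h : Fin n → R, ‖Th h‖ := by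
      refine le_trans (Complex.re_le_norm _) ?_
      simpa using norm_sum_le (Finset.univ : Finset (Fin n → R)) Th
    have hgb : ∀ h i x, ‖g h i x‖ ≤ 1 := by
      intro h i x
      rw [hg]
      simp only [norm_mul]
      rw [Complex.norm_conj]
      have := hf i.succ x
      have := hf i.succ (x + vd (b i) h)
      calc ‖F i x‖ * ‖F i (x + vd (b i) h)‖
          ≤ 1 * 1 := by
            apply mul_le_mul (hf i.succ x) (hf i.succ _) (norm_nonneg _) zero_le_one
        _ = 1 := by norm_num
    have hbc : ∀ i j : Fin (m+1), i ≠ j → IsUnit (b i k0 - b j k0) := by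
      intro i j hij
      have h1 := hc i.succ j.succ (fun e => hij (Fin.succ_injective _ e))
      have : b i k0 - b j k0 = c i.succ k0 - c j.succ k0 := by
        simp only [hb]
        ring
      rw [this]
      exact h1
    have step6 : ∀ h : Fin n → R,
        ‖Th h‖ ^ 2^m * K^(m+1) ≤ K^((n+1)*2^m) * USum m (g h (Fin.last m)) :=
      fun h => ih (b) (g h) (hgb h) hbc
    have hglast : ∀ h : Fin n → R, USum m (g h (Fin.last m))
        = USum m (mDeriv (vd (b (Fin.last m)) h) (f (Fin.last (m+1)))) := by
      intro h
      have hfl : F (Fin.last m) = f (Fin.last (m+1)) := by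
        rw [hF]
        simp only [Fin.succ_last]
      have : g h (Fin.last m) = fun x => (starRingEnd ℂ)
          ((mDeriv (vd (b (Fin.last m)) h) (f (Fin.last (m+1)))) x) := by
        funext x
        simp only [hg, mDeriv, hfl, map_mul, Complex.conj_conj]
        ring
      rw [this, USum_conj]
    have hblast : IsUnit (b (Fin.last m) k0) := by
      have h1 := hc (Fin.last m).succ 0 (Fin.succ_ne_zero _)
      have : b (Fin.last m) k0 = c (Fin.last m).succ k0 - c 0 k0 := by simp only [hb]
      rw [this]
      exact h1
    have step8 : ∑ h : Fin n → R, USum m (mDeriv (vd (b (Fin.last m)) h) (f (Fin.last (m+1))))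
        = (Fintype.card R)^(n-1) • ∑ t : R, USum m (mDeriv t (f (Fin.last (m+1)))) :=
      sum_comp_linear k0 (b (Fin.last m)) hblast
        (fun t => USum m (mDeriv t (f (Fin.last (m+1)))))
    have hUsucc : ∑ t : R, USum m (mDeriv t (f (Fin.last (m+1))))
        = USum (m+1) (f (Fin.last (m+1))) := (USum_succ m _).symm
    -- power mean
    have hcardfun : (((Finset.univ : Finset (Fin n → R)).card : ℝ)) = K ^ n := by
      rw [Finset.card_univ, hK]
      push_cast [Fintype.card_fun, Fintype.card_fin]
      ring
    have h2pos : 0 < 2^m := Nat.pow_pos (by norm_num)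
    have h2 : 2^m - 1 + 1 = 2^m := Nat.succ_pred_eq_of_pos h2pos
    have hps : (∑ h : Fin n → R, ‖Th h‖) ^ (2^m)
        ≤ (K^n) ^ (2^m - 1) * ∑ h : Fin n → R, ‖Th h‖ ^ (2^m) := by
      have hj := pow_sum_le_card_mul_sum_pow (s := (Finset.univ : Finset (Fin n → R)))
        (f := fun h => ‖Th h‖) (fun i _ => norm_nonneg _) (2^m - 1)
      rw [h2, hcardfun] at hj
      exact hj
    -- exponent arithmetic
    have hE : 2^m + n*(2^m-1) + 1 + ((n+1)*2^m + (n-1)) = (n+1)*2^(m+1) := by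
      obtain ⟨p, hp⟩ : ∃ p, 2^m = p + 1 := ⟨2^m - 1, by omega⟩
      obtain ⟨q, hq⟩ : ∃ q, n = q + 1 := ⟨n - 1, by omega⟩
      rw [pow_succ, hp, hq]
      simp only [Nat.add_sub_cancel]
      ring
    -- assemble
    have hUnn : 0 ≤ ∑ h : Fin n → R, ‖Th h‖ :=
      Finset.sum_nonneg fun h _ => norm_nonneg _
    rw [step1]
    calc ‖∑ x : R, f 0 x * G x‖ ^ 2^(m+1) * K^(m+1+1)
        = (‖∑ x : R, f 0 x * G x‖ ^ 2) ^ 2^m * K^(m+1+1) := by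
          rw [← pow_mul]
          congr 1
          rw [pow_succ]
          ring
      _ ≤ (K * ∑ h : Fin n → R, ‖Th h‖) ^ 2^m * K^(m+1+1) := by
          apply mul_le_mul_of_nonneg_right _ (by positivity)
          apply pow_le_pow_left₀ (sq_nonneg _)
          calc ‖∑ x : R, f 0 x * G x‖ ^ 2
              ≤ (∑ x : R, ‖G x‖) ^ 2 :=
                pow_le_pow_left₀ (norm_nonneg _) step2 2
            _ ≤ K * ∑ x : R, ‖G x‖ ^ 2 := step3
            _ = K * (∑ h : Fin n → R, Th h).re := by rw [step4]
            _ ≤ K * ∑ h : Fin n → R, ‖Th h‖ :=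
                mul_le_mul_of_nonneg_left step5 hK0
      _ = K ^ 2^m * (∑ h : Fin n → R, ‖Th h‖) ^ 2^m * K^(m+1+1) := by
          rw [mul_pow]
      _ ≤ K ^ 2^m * ((K^n) ^ (2^m - 1) * ∑ h : Fin n → R, ‖Th h‖ ^ (2^m))
            * K^(m+1+1) := by
          apply mul_le_mul_of_nonneg_right _ (by positivity)
          exact mul_le_mul_of_nonneg_left hps (by positivity)
      _ = K ^ 2^m * (K^n) ^ (2^m - 1) * K ^ 1 *
            ∑ h : Fin n → R, ‖Th h‖ ^ (2^m) * K^(m+1) := by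
          rw [← Finset.sum_mul]
          ring
      _ ≤ K ^ 2^m * (K^n) ^ (2^m - 1) * K ^ 1 *
            ∑ h : Fin n → R, K^((n+1)*2^m) * USum m (g h (Fin.last m)) := by
          apply mul_le_mul_of_nonneg_left (Finset.sum_le_sum fun h _ => step6 h)
            (by positivity)
      _ = K ^ 2^m * (K^n) ^ (2^m - 1) * K ^ 1 * K^((n+1)*2^m) *
            ∑ h : Fin n → R, USum m (mDeriv (vd (b (Fin.last m)) h) (f (Fin.last (m+1)))) := by
          rw [← Finset.mul_sum]
          rw [Finset.sum_congr rfl fun h _ => hglast h]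
          ring
      _ = K ^ 2^m * (K^n) ^ (2^m - 1) * K ^ 1 * K^((n+1)*2^m) *
            (K^(n-1) * USum (m+1) (f (Fin.last (m+1)))) := by
          rw [step8, nsmul_eq_mul, hUsucc, hK]
          push_cast
          ring
      _ = K ^ (2^m + n*(2^m-1) + 1 + ((n+1)*2^m + (n-1)))
            * USum (m+1) (f (Fin.last (m+1))) := by
          rw [← pow_mul K n (2^m-1)]
          rw [pow_add, pow_add, pow_add, pow_add]
          ring
      _ = K ^ ((n+1) * 2 ^ (m+1)) * USum (m+1) (f (Fin.last (m+1))) := by rw [hE]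

end Engine

/-- **Lemma (Gowers norms control invertible linear averages).** Let `R` be a finite
commutative ring of characteristic `N`, and for `i = 1, …, d` let `a⁽ⁱ⁾ ∈ (ℤ/Nℤ)ⁿ` be tuples,
viewed in `R` via the canonical map, whose components are units and whose pairwise differences
have unit components. Then the linear average of 1-bounded `f₀, …, f_d` along these tuples is
bounded by `‖f_d‖_{U^d}`. -/
theorem gowers_controls_linear_averages
    (d n : ℕ) (hd : 0 < d) (hn : 0 < n)
    (R : Type*) [CommRing R] [Fintype R] [Nontrivial R]
    (f : Fin (d + 1) → R → ℂ) (hf : ∀ i x, ‖f i x‖ ≤ 1)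
    (a : Fin d → Fin n → ZMod (ringChar R))
    (ha : ∀ i k, IsUnit ((ZMod.castHom (dvd_refl (ringChar R)) R) (a i k)))
    (ha' : ∀ i j, i ≠ j →
      ∀ k, IsUnit ((ZMod.castHom (dvd_refl (ringChar R)) R) (a i k - a j k))) :
    ‖(1 / (Fintype.card R : ℂ) ^ (n + 1)) *
        ∑ x : R, ∑ y : Fin n → R,
          f 0 x * ∏ i : Fin d,
            f i.succ (x + ∑ k : Fin n,
              (ZMod.castHom (dvd_refl (ringChar R)) R) (a i k) * y k)‖
      ≤ gowersNorm R d (f (Fin.last d)) := by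
  classical
  set K : ℝ := (Fintype.card R : ℝ) with hK
  have hKpos : (0:ℝ) < K := by
    rw [hK]
    exact_mod_cast Fintype.card_pos
  set k0 : Fin n := ⟨0, hn⟩ with hk0
  set cast : ZMod (ringChar R) →+* R := ZMod.castHom (dvd_refl (ringChar R)) R with hcast
  set c : Fin (d+1) → Fin n → R :=
    Fin.cons (fun _ => (0:R)) (fun i k => cast (a i k)) with hc
  set T : ℂ := ∑ x : R, ∑ y : Fin n → R, ∏ i : Fin (d+1), f i (x + vd (c i) y) with hT
  have hTeq : (∑ x : R, ∑ y : Fin n → R,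
      f 0 x * ∏ i : Fin d, f i.succ (x + ∑ k : Fin n, cast (a i k) * y k)) = T := by
    rw [hT]
    refine Finset.sum_congr rfl fun x _ => Finset.sum_congr rfl fun y _ => ?_
    rw [Fin.prod_univ_succ, hc]
    simp only [Fin.cons_zero, Fin.cons_succ]
    have hv0 : vd (fun _ => (0:R)) y = 0 := by simp [vd]
    rw [hv0, add_zero]
    rfl
  have hcunit : ∀ i j : Fin (d+1), i ≠ j → IsUnit (c i k0 - c j k0) := by
    intro i j hij
    rcases Fin.eq_zero_or_eq_succ i with rfl | ⟨i', rfl⟩ <;>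
      rcases Fin.eq_zero_or_eq_succ j with rfl | ⟨j', rfl⟩
    · exact absurd rfl hij
    · have : c 0 k0 - c j'.succ k0 = -(cast (a j' k0)) := by
        rw [hc]
        simp
      rw [this]
      exact (ha j' k0).neg
    · have : c i'.succ k0 - c 0 k0 = cast (a i' k0) := by
        rw [hc]
        simp
      rw [this]
      exact ha i' k0
    · have : c i'.succ k0 - c j'.succ k0 = cast (a i' k0 - a j' k0) := by
        rw [hc, map_sub]
        simp
      rw [this]
      exact ha' i' j' (fun e => hij (by rw [e])) k0
  have hmain := engine hn d hd c f hf hcunit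
  rw [← hT] at hmain
  set U : ℝ := USum d (f (Fin.last d)) with hU
  -- rewrite goal
  rw [hTeq]
  have hgow : gowersNorm R d (f (Fin.last d)) = ((1/K^(d+1)) * U) ^ ((1:ℝ)/2^d) := by
    rw [gowersNorm, hU, USum]
    congr 1
    rw [show ((1:ℂ) / (Fintype.card R : ℂ)^(d+1)) = (((1/K^(d+1) : ℝ)) : ℂ) by
      rw [hK]; push_cast; ring]
    exact Complex.re_ofReal_mul _ _
  have habs : ‖(1 / (Fintype.card R : ℂ) ^ (n + 1)) * T‖
      = (1/K^(n+1)) * ‖T‖ := by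
    rw [norm_mul]
    congr 1
    rw [norm_div, norm_one, norm_pow, Complex.norm_natCast, hK]
  rw [habs, hgow]
  set A : ℝ := (1/K^(n+1)) * ‖T‖ with hA
  have hA0 : 0 ≤ A := by positivity
  have hineq : A ^ (2^d : ℕ) ≤ (1/K^(d+1)) * U := by
    have hexp : (K^(n+1))^(2^d : ℕ) = K^((n+1)*2^d) := (pow_mul K (n+1) (2^d)).symm
    rw [hA, mul_pow, one_div, inv_pow, hexp]
    rw [inv_mul_le_iff₀ (by positivity), one_div, ← mul_assoc]
    calc ‖T‖ ^ 2^d ≤ (K ^ ((n+1)*2^d) * U) / K^(d+1) := by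
          rw [le_div_iff₀ (by positivity)]
          exact hmain
      _ = K ^ ((n + 1) * 2 ^ d) * (K ^ (d + 1))⁻¹ * U := by
          rw [div_eq_mul_inv]
          ring
  have hroot : A = (A ^ (2^d : ℕ)) ^ ((1:ℝ)/2^d) := by
    rw [← Real.rpow_natCast A (2^d), ← Real.rpow_mul hA0]
    rw [show ((2^d : ℕ) : ℝ) * ((1:ℝ)/2^d) = 1 by
      push_cast
      try field_simp]
    exact (Real.rpow_one A).symm
  rw [hroot]
  exact Real.rpow_le_rpow (by positivity) hineq (by positivity)
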